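/- arXiv:2402.05451 — 2 statements merged into one kernel-verified Lean document; each statement's English description precedes it below -/
import Mathlib

section
/- Let n, k ≤ n, D be positive integers and let M be a mask over ground set [n] with vertices v, u ∈ V(M). Then LDUB(n, M) ≤ LDUB(n, Donate(M, v→u)); that is, donation from v to u cannot decrease the low-degree likelihood ratio upper bound. -/
open Finset Filter Asymptotics Real MeasureTheory
open scoped Classical BigOperators

noncomputable section

namespace PlantedCliqueLD

/-- The vertex set `V(M)` of a mask `M` over ground set `[n]`. -/
def maskVerts {n : ℕ} (M : Finset (Sym2 (Fin n))) : Finset (Fin n) :=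
  Finset.univ.filter fun v => ∃ e ∈ M, v ∈ e

/-- The mask degree `deg^M(v)` of a vertex `v`. -/
def maskDeg {n : ℕ} (M : Finset (Sym2 (Fin n))) (v : Fin n) : ℕ :=
  (M.filter fun e => v ∈ e).card

/-- Expectation of `f` under `Clique(n,k)`, the uniform distribution on
subsets of `[n]` of size `k` (identifying a 0/1 vector with its support). -/
def cliqueExp (n k : ℕ) (f : Finset (Fin n) → ℝ) : ℝ :=
  (∑ S ∈ Finset.powersetCard k (Finset.univ : Finset (Fin n)), f S) /
    ((Finset.powersetCard k (Finset.univ : Finset (Fin n))).card : ℝ)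

/-- Expectation of `f` under `Clique(n,k,S)`: uniform over size-`k` subsets of `S`. -/
def cliqueExpCond (n k : ℕ) (S : Finset (Fin n)) (f : Finset (Fin n) → ℝ) : ℝ :=
  (∑ T ∈ Finset.powersetCard k S, f T) / ((Finset.powersetCard k S).card : ℝ)

/-- Both endpoints of the unordered pair `e` lie in `T`. -/
def edgeIn {n : ℕ} (T : Finset (Fin n)) (e : Sym2 (Fin n)) : Prop :=
  ∀ v ∈ e, v ∈ T

/-- `Φ(M) = ∑_{(i,j) ∈ M} Z_i Z_j` where `Z_i` is the indicator of `i ∈ T`. -/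
def Phi {n : ℕ} (M : Finset (Sym2 (Fin n))) (T : Finset (Fin n)) : ℝ :=
  ∑ e ∈ M, if edgeIn T e then (1 : ℝ) else 0

/-- The low-degree likelihood ratio upper bound `LDUB(n,M)` at degree `D`
and clique size `k`:  `1 + ∑_{d=1}^D (1/d!) E[(∑_{(i,j)∈M} Z_i Z_j)^d]`,
where `Z_i = X_i X'_i` for independent `X, X' ~ Clique(n,k)`. -/
def LDUB (n k D : ℕ) (M : Finset (Sym2 (Fin n))) : ℝ :=
  1 + ∑ d ∈ Finset.Icc 1 D, (1 / (Nat.factorial d : ℝ)) *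
    cliqueExp n k fun S => cliqueExp n k fun S' => Phi M (S ∩ S') ^ d

/-- The conditional low-degree likelihood ratio upper bound `Cond(n,M,S)`,
defined as `LDUB` but with `X, X' ~ Clique(n,k,S)`. -/
def CondLDUB (n k D : ℕ) (M : Finset (Sym2 (Fin n))) (S : Finset (Fin n)) : ℝ :=
  1 + ∑ d ∈ Finset.Icc 1 D, (1 / (Nat.factorial d : ℝ)) *
    cliqueExpCond n k S fun X => cliqueExpCond n k S fun X' => Phi M (X ∩ X') ^ d

/-- The set of vertices that donate an edge in `Donate(M, v → u)`:
those `s ∉ {v,u}` with `(s,v) ∈ M` and `(s,u) ∉ M`. -/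
def donorSet {n : ℕ} (M : Finset (Sym2 (Fin n))) (v u : Fin n) : Finset (Fin n) :=
  Finset.univ.filter fun s => s ≠ v ∧ s ≠ u ∧ s(s, v) ∈ M ∧ s(s, u) ∉ M

/-- `Donate(M, v → u)`: for every `s ∈ V(M) \ {v,u}` with `(s,v) ∈ M` and
`(s,u) ∉ M`, remove `(s,v)` and add `(s,u)`. -/
def donate {n : ℕ} (M : Finset (Sym2 (Fin n))) (v u : Fin n) : Finset (Sym2 (Fin n)) :=
  (M \ (donorSet M v u).image fun s => s(s, v)) ∪ (donorSet M v u).image fun s => s(s, u)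

/-- The `±1` value encoded by a Boolean. -/
def signVal (b : Bool) : ℝ := if b then 1 else -1

/-- Expectation of `h` under the (masked) Erdős–Rényi null distribution:
all coordinates independent uniform `±1`.  (Since `h` is only ever applied
through coordinates of the mask, this realizes the marginal `G(n,M)`.) -/
def nullExp (n : ℕ) (h : (Sym2 (Fin n) → ℝ) → ℝ) : ℝ :=
  (∑ A : Sym2 (Fin n) → Bool, h fun e => signVal (A e)) /
    (Fintype.card (Sym2 (Fin n) → Bool) : ℝ)

/-- The planted sample: edges inside the clique `S` are `+1`; all other
coordinates take the independent uniform `±1` values given by `A`. -/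
def plantedSample {n : ℕ} (S : Finset (Fin n)) (A : Sym2 (Fin n) → Bool) :
    Sym2 (Fin n) → ℝ := fun e => if edgeIn S e then 1 else signVal (A e)

/-- Joint expectation of `h(K, Y)` where `K ~ Clique(n,k)` is the planted
clique and `Y` is the planted-clique sample (this realizes `G(n,k,M)` for
functions reading only mask coordinates, jointly with the clique). -/
def plantedJointExp (n k : ℕ) (h : Finset (Fin n) → (Sym2 (Fin n) → ℝ) → ℝ) : ℝ :=
  cliqueExp n k fun S =>
    (∑ A : Sym2 (Fin n) → Bool, h S (plantedSample S A)) /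
      (Fintype.card (Sym2 (Fin n) → Bool) : ℝ)

/-- Expectation of `h(Y)` under the planted clique distribution. -/
def plantedExp (n k : ℕ) (h : (Sym2 (Fin n) → ℝ) → ℝ) : ℝ :=
  plantedJointExp n k fun _ Y => h Y

/-- Variance under the null distribution. -/
def nullVar (n : ℕ) (h : (Sym2 (Fin n) → ℝ) → ℝ) : ℝ :=
  nullExp n fun Y => (h Y - nullExp n h) ^ 2

/-- Variance under the planted distribution. -/
def plantedVar (n k : ℕ) (h : (Sym2 (Fin n) → ℝ) → ℝ) : ℝ :=
  plantedExp n k fun Y => (h Y - plantedExp n k h) ^ 2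

/-- Evaluate a polynomial whose variables are the entries of the mask `M`
on a (full) sample `Y`, reading only the coordinates in `M`. -/
def evalMasked {n : ℕ} (M : Finset (Sym2 (Fin n)))
    (f : MvPolynomial {e : Sym2 (Fin n) // e ∈ M} ℝ) (Y : Sym2 (Fin n) → ℝ) : ℝ :=
  MvPolynomial.eval (fun e => Y e.1) f

section DonationAux

variable {n : ℕ}

lemma edgeIn_mk {T : Finset (Fin n)} {a b : Fin n} :
    edgeIn T s(a, b) ↔ a ∈ T ∧ b ∈ T := by
  constructor
  · intro h; exact ⟨h a (Sym2.mem_mk_left a b), h b (Sym2.mem_mk_right a b)⟩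
  · rintro ⟨ha, hb⟩ w hw
    rcases Sym2.mem_iff.mp hw with rfl | rfl <;> assumption

/-- Counting version of `Phi`. -/
def cnt (N : Finset (Sym2 (Fin n))) (T : Finset (Fin n)) : ℕ :=
  (N.filter fun e => edgeIn T e).card

lemma Phi_eq_cnt (N : Finset (Sym2 (Fin n))) (T : Finset (Fin n)) :
    Phi N T = (cnt N T : ℝ) := by
  rw [Phi, Finset.sum_boole, cnt]

/-- Image of a vertex set under the swap of `v` and `u`. -/
def tau (v u : Fin n) (T : Finset (Fin n)) : Finset (Fin n) :=
  T.map (Equiv.swap v u).toEmbedding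

lemma mem_tau {v u : Fin n} {T : Finset (Fin n)} {s : Fin n} :
    s ∈ tau v u T ↔ Equiv.swap v u s ∈ T := by
  rw [tau, Finset.mem_map_equiv, Equiv.symm_swap]

lemma tau_tau {v u : Fin n} (T : Finset (Fin n)) : tau v u (tau v u T) = T := by
  ext s; rw [mem_tau, mem_tau, Equiv.swap_apply_self]

lemma mem_tau_of_ne {v u : Fin n} {T : Finset (Fin n)} {s : Fin n}
    (hs : s ≠ v) (hs' : s ≠ u) : s ∈ tau v u T ↔ s ∈ T := by
  rw [mem_tau, Equiv.swap_apply_of_ne_of_ne hs hs']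

lemma v_mem_tau {v u : Fin n} {T : Finset (Fin n)} : v ∈ tau v u T ↔ u ∈ T := by
  rw [mem_tau, Equiv.swap_apply_left]

lemma u_mem_tau {v u : Fin n} {T : Finset (Fin n)} : u ∈ tau v u T ↔ v ∈ T := by
  rw [mem_tau, Equiv.swap_apply_right]

lemma cnt_union {A B : Finset (Sym2 (Fin n))} (h : Disjoint A B) (T : Finset (Fin n)) :
    cnt (A ∪ B) T = cnt A T + cnt B T := by
  rw [cnt, Finset.filter_union, Finset.card_union_of_disjoint
    (Finset.disjoint_filter_filter h), cnt, cnt]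

lemma cnt_image_pair {D : Finset (Fin n)} {w : Fin n} (hw : ∀ s ∈ D, s ≠ w)
    {T : Finset (Fin n)} (hwT : w ∈ T) :
    cnt (D.image fun s => s(s, w)) T = (D.filter (· ∈ T)).card := by
  rw [cnt, Finset.filter_image]
  rw [Finset.card_image_of_injOn]
  · congr 1
    apply Finset.filter_congr
    intro s hs
    rw [edgeIn_mk]
    simp [hwT]
  · intro s hs t ht hst
    simp only [Finset.coe_filter, Set.mem_setOf_eq] at hs ht
    rcases Sym2.eq_iff.mp hst with ⟨h1, _⟩ | ⟨h1, h2⟩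
    · exact h1
    · exact absurd h1 (hw s hs.1)

lemma cnt_image_pair_zero {D : Finset (Fin n)} {w : Fin n}
    {T : Finset (Fin n)} (hwT : w ∉ T) :
    cnt (D.image fun s => s(s, w)) T = 0 := by
  rw [cnt, Finset.card_eq_zero, Finset.filter_eq_empty_iff]
  rintro e he
  rw [Finset.mem_image] at he
  obtain ⟨s, _, rfl⟩ := he
  rw [edgeIn_mk]
  exact fun h => hwT h.2

/-- The key injection lemma: if every `v`-edge of `N` has a matching `u`-edge,
then moving to the swapped vertex set cannot decrease the count. -/
lemma cnt_le_cnt_tau {N : Finset (Sym2 (Fin n))} {v u : Fin n} {T : Finset (Fin n)}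
    (hnd : ∀ e ∈ N, ¬ e.IsDiag)
    (hprop : ∀ s : Fin n, s ≠ u → s(s, v) ∈ N → s(s, u) ∈ N)
    (hvT : v ∈ T) (huT : u ∉ T) :
    cnt N T ≤ cnt N (tau v u T) := by
  apply Finset.card_le_card_of_injOn (Sym2.map (Equiv.swap v u))
  · intro e he
    rw [Finset.mem_coe, Finset.mem_filter] at he
    rw [Finset.mem_coe, Finset.mem_filter]
    obtain ⟨heN, heT⟩ := he
    constructor
    · -- membership in N
      induction e using Sym2.ind with
      | _ a b =>
        rw [edgeIn_mk] at heT
        have hau : a ≠ u := fun h => huT (h ▸ heT.1)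
        have hbu : b ≠ u := fun h => huT (h ▸ heT.2)
        have hab : a ≠ b := by
          intro h; exact hnd _ heN (Sym2.mk_isDiag_iff.mpr h)
        rw [Sym2.map_pair_eq]
        by_cases hav : a = v
        · subst hav
          rw [Equiv.swap_apply_left, Equiv.swap_apply_of_ne_of_ne hab.symm hbu]
          have h1 : s(b, a) ∈ N := by rw [Sym2.eq_swap]; exact heN
          have h2 := hprop b hbu h1
          rw [Sym2.eq_swap]; exact h2
        · by_cases hbv : b = v
          · subst hbv
            rw [Equiv.swap_apply_left, Equiv.swap_apply_of_ne_of_ne hav hau]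
            exact hprop a hau heN
          · rw [Equiv.swap_apply_of_ne_of_ne hav hau,
              Equiv.swap_apply_of_ne_of_ne hbv hbu]
            exact heN
    · -- edgeIn (tau v u T)
      intro w hw
      rw [Sym2.mem_map] at hw
      obtain ⟨w', hw', rfl⟩ := hw
      rw [mem_tau, Equiv.swap_apply_self]
      exact heT w' hw'
  · exact fun e₁ _ e₂ _ h => Sym2.map.injective (Equiv.swap v u).injective h

lemma pow_sub_pow_le {a b x : ℝ} (ha : 0 ≤ a) (hab : a ≤ b) (hx : 0 ≤ x) (d : ℕ) :
    b ^ d - a ^ d ≤ (b + x) ^ d - (a + x) ^ d := by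
  rw [← geom_sum₂_mul b a d, ← geom_sum₂_mul (b + x) (a + x) d]
  have h1 : (b + x) - (a + x) = b - a := by ring
  rw [h1]
  apply mul_le_mul_of_nonneg_right _ (by linarith)
  apply Finset.sum_le_sum
  intro i _
  apply mul_le_mul
  · exact pow_le_pow_left₀ (by linarith) (by linarith) _
  · exact pow_le_pow_left₀ ha (by linarith) _
  · exact pow_nonneg ha _
  · exact pow_nonneg (by linarith) _

lemma convexity_ineq {a b x : ℝ} (ha : 0 ≤ a) (hab : a ≤ b) (hx : 0 ≤ x) (d : ℕ) :
    (a + x) ^ d + b ^ d ≤ a ^ d + (b + x) ^ d := by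
  have := pow_sub_pow_le ha hab hx d
  linarith

lemma donorSet_mem_iff {M : Finset (Sym2 (Fin n))} {v u s : Fin n} :
    s ∈ donorSet M v u ↔ s ≠ v ∧ s ≠ u ∧ s(s, v) ∈ M ∧ s(s, u) ∉ M := by
  simp [donorSet]

end DonationAux
section DonationCore

variable {n : ℕ}

lemma cnt_M_split (M : Finset (Sym2 (Fin n))) (v u : Fin n) (T : Finset (Fin n)) :
    cnt M T = cnt (M \ (donorSet M v u).image fun s => s(s, v)) T
      + cnt ((donorSet M v u).image fun s => s(s, v)) T := by
  have hEvM : ((donorSet M v u).image fun s => s(s, v)) ⊆ M := by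
    intro e he; rw [Finset.mem_image] at he
    obtain ⟨s, hs, rfl⟩ := he
    exact (donorSet_mem_iff.mp hs).2.2.1
  conv_lhs => rw [← Finset.sdiff_union_of_subset hEvM]
  exact cnt_union Finset.sdiff_disjoint T

lemma cnt_donate_split (M : Finset (Sym2 (Fin n))) (v u : Fin n) (T : Finset (Fin n)) :
    cnt (donate M v u) T = cnt (M \ (donorSet M v u).image fun s => s(s, v)) T
      + cnt ((donorSet M v u).image fun s => s(s, u)) T := by
  have hEuM : Disjoint ((donorSet M v u).image fun s => s(s, u)) M := by
    rw [Finset.disjoint_left]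
    intro e he heM
    rw [Finset.mem_image] at he
    obtain ⟨s, hs, rfl⟩ := he
    exact (donorSet_mem_iff.mp hs).2.2.2 heM
  rw [donate]
  exact cnt_union (Finset.disjoint_of_subset_left Finset.sdiff_subset hEuM.symm) T

lemma tau_eq_self {v u : Fin n} {T : Finset (Fin n)} (h : v ∈ T ↔ u ∈ T) :
    tau v u T = T := by
  ext s
  by_cases hsv : s = v
  · subst hsv; rw [v_mem_tau]; exact h.symm
  · by_cases hsu : s = u
    · subst hsu; rw [u_mem_tau]; exact h
    · exact mem_tau_of_ne hsv hsu

lemma cnt_donate_eq {M : Finset (Sym2 (Fin n))} {v u : Fin n} {T : Finset (Fin n)}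
    (h : v ∈ T ↔ u ∈ T) :
    cnt (donate M v u) T = cnt M T := by
  rw [cnt_donate_split M v u T, cnt_M_split M v u T]
  congr 1
  by_cases hvT : v ∈ T
  · have huT : u ∈ T := h.mp hvT
    rw [cnt_image_pair (fun s hs => (donorSet_mem_iff.mp hs).2.1) huT,
      cnt_image_pair (fun s hs => (donorSet_mem_iff.mp hs).1) hvT]
  · have huT : u ∉ T := fun hc => hvT (h.mpr hc)
    rw [cnt_image_pair_zero huT, cnt_image_pair_zero hvT]

lemma key_caseB {M : Finset (Sym2 (Fin n))} (hMnd : ∀ e ∈ M, ¬ e.IsDiag)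
    {v u : Fin n} (hvu : v ≠ u) (d : ℕ) {T : Finset (Fin n)}
    (hvT : v ∈ T) (huT : u ∉ T) :
    Phi M T ^ d + Phi M (tau v u T) ^ d ≤
      Phi (donate M v u) T ^ d + Phi (donate M v u) (tau v u T) ^ d := by
  set Dv := donorSet M v u with hDv
  have hdne_v : ∀ s ∈ Dv, s ≠ v := fun s hs => (donorSet_mem_iff.mp hs).1
  have hdne_u : ∀ s ∈ Dv, s ≠ u := fun s hs => (donorSet_mem_iff.mp hs).2.1
  have x_def : cnt (Dv.image fun s => s(s, v)) T = (Dv.filter (· ∈ T)).card :=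
    cnt_image_pair hdne_v hvT
  have hEuT : cnt (Dv.image fun s => s(s, u)) T = 0 := cnt_image_pair_zero huT
  have hEvT' : cnt (Dv.image fun s => s(s, v)) (tau v u T) = 0 :=
    cnt_image_pair_zero (by rw [v_mem_tau]; exact huT)
  have hEuT' : cnt (Dv.image fun s => s(s, u)) (tau v u T)
      = (Dv.filter (· ∈ tau v u T)).card :=
    cnt_image_pair hdne_u (by rw [u_mem_tau]; exact hvT)
  have hfilt : Dv.filter (· ∈ tau v u T) = Dv.filter (· ∈ T) := by
    apply Finset.filter_congr
    intro s hs
    exact mem_tau_of_ne (hdne_v s hs) (hdne_u s hs)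
  have hab : cnt (M \ Dv.image fun s => s(s, v)) T
      ≤ cnt (M \ Dv.image fun s => s(s, v)) (tau v u T) := by
    apply cnt_le_cnt_tau (fun e he => hMnd e (Finset.mem_sdiff.mp he).1) _ hvT huT
    intro s hsu hsv
    rw [Finset.mem_sdiff] at hsv ⊢
    obtain ⟨hsvM, hsvEv⟩ := hsv
    have hsnev : s ≠ v := by
      intro h; subst h; exact hMnd _ hsvM (Sym2.mk_isDiag_iff.mpr rfl)
    have hsuM : s(s, u) ∈ M := by
      by_contra hc
      exact hsvEv (Finset.mem_image.mpr
        ⟨s, donorSet_mem_iff.mpr ⟨hsnev, hsu, hsvM, hc⟩, rfl⟩)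
    refine ⟨hsuM, ?_⟩
    intro hc
    rw [Finset.mem_image] at hc
    obtain ⟨t, ht, hte⟩ := hc
    rcases Sym2.eq_iff.mp hte with ⟨h1, h2⟩ | ⟨h1, h2⟩
    · exact hvu h2
    · exact hdne_u t ht h1
  rw [Phi_eq_cnt, Phi_eq_cnt, Phi_eq_cnt, Phi_eq_cnt,
    cnt_M_split M v u T, cnt_M_split M v u (tau v u T),
    cnt_donate_split M v u T, cnt_donate_split M v u (tau v u T)]
  rw [← hDv, hEuT, hEvT', hEuT', hfilt, x_def, Nat.add_zero, Nat.add_zero]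
  push_cast
  exact convexity_ineq (by positivity) (by exact_mod_cast hab) (by positivity) d

lemma key_ineq {M : Finset (Sym2 (Fin n))} (hMnd : ∀ e ∈ M, ¬ e.IsDiag)
    {v u : Fin n} (hvu : v ≠ u) (d : ℕ) (T : Finset (Fin n)) :
    Phi M T ^ d + Phi M (tau v u T) ^ d ≤
      Phi (donate M v u) T ^ d + Phi (donate M v u) (tau v u T) ^ d := by
  by_cases hvT : v ∈ T <;> by_cases huT : u ∈ T
  · have ht : tau v u T = T := tau_eq_self (by tauto)
    rw [ht, Phi_eq_cnt, Phi_eq_cnt, cnt_donate_eq (by tauto)]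
  · exact key_caseB hMnd hvu d hvT huT
  · have h := key_caseB hMnd hvu d (T := tau v u T)
      (v_mem_tau.mpr huT) (fun hc => hvT (u_mem_tau.mp hc))
    rw [tau_tau] at h
    linarith
  · have ht : tau v u T = T := tau_eq_self (by tauto)
    rw [ht, Phi_eq_cnt, Phi_eq_cnt, cnt_donate_eq (by tauto)]

lemma sum_reindex (v u : Fin n) (k : ℕ) (F : Finset (Fin n) → ℝ) :
    ∑ S ∈ Finset.powersetCard k (Finset.univ : Finset (Fin n)), F (tau v u S)
      = ∑ S ∈ Finset.powersetCard k (Finset.univ : Finset (Fin n)), F S := by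
  refine Finset.sum_nbij' (fun S => tau v u S) (fun S => tau v u S) ?_ ?_ ?_ ?_ ?_
  · intro S hS
    rw [Finset.mem_powersetCard_univ] at hS ⊢
    simp only [tau, Finset.card_map]; exact hS
  · intro S hS
    rw [Finset.mem_powersetCard_univ] at hS ⊢
    simp only [tau, Finset.card_map]; exact hS
  · intro S _; exact tau_tau S
  · intro S _; exact tau_tau S
  · intro S _; rfl

lemma tau_inter (v u : Fin n) (S S' : Finset (Fin n)) :
    tau v u (S ∩ S') = tau v u S ∩ tau v u S' := Finset.map_inter S S'

lemma double_sum_le {M : Finset (Sym2 (Fin n))} (hMnd : ∀ e ∈ M, ¬ e.IsDiag)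
    {v u : Fin n} (hvu : v ≠ u) (k d : ℕ) :
    (∑ S ∈ Finset.powersetCard k (Finset.univ : Finset (Fin n)),
      ∑ S' ∈ Finset.powersetCard k (Finset.univ : Finset (Fin n)), Phi M (S ∩ S') ^ d)
    ≤ ∑ S ∈ Finset.powersetCard k (Finset.univ : Finset (Fin n)),
      ∑ S' ∈ Finset.powersetCard k (Finset.univ : Finset (Fin n)),
        Phi (donate M v u) (S ∩ S') ^ d := by
  set P := Finset.powersetCard k (Finset.univ : Finset (Fin n)) with hP
  have h2 : ∀ N : Finset (Sym2 (Fin n)),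
      (∑ S ∈ P, ∑ S' ∈ P, Phi N (tau v u (S ∩ S')) ^ d)
        = ∑ S ∈ P, ∑ S' ∈ P, Phi N (S ∩ S') ^ d := by
    intro N
    rw [← sum_reindex v u k (fun S => ∑ S' ∈ P, Phi N (S ∩ S') ^ d)]
    apply Finset.sum_congr rfl
    intro S _
    rw [← sum_reindex v u k (fun S' => Phi N (tau v u S ∩ S') ^ d)]
    apply Finset.sum_congr rfl
    intro S' _
    rw [tau_inter]
  have H : (∑ S ∈ P, ∑ S' ∈ P,
        (Phi M (S ∩ S') ^ d + Phi M (tau v u (S ∩ S')) ^ d))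
      ≤ ∑ S ∈ P, ∑ S' ∈ P,
        (Phi (donate M v u) (S ∩ S') ^ d + Phi (donate M v u) (tau v u (S ∩ S')) ^ d) :=
    Finset.sum_le_sum fun S _ => Finset.sum_le_sum fun S' _ => key_ineq hMnd hvu d _
  simp only [Finset.sum_add_distrib] at H
  have h2M := h2 M
  have h2M' := h2 (donate M v u)
  linarith

end DonationCore
/-- Donation cannot decrease the low-degree likelihood
ratio upper bound: `LDUB(n, M) ≤ LDUB(n, Donate(M, v→u))`. -/
theorem donation_mono {n : ℕ} (k D : ℕ) (hn : 0 < n) (hk : 0 < k) (hkn : k ≤ n)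
    (hD : 0 < D) (M : Finset (Sym2 (Fin n))) (hMnd : ∀ e ∈ M, ¬ e.IsDiag)
    (v u : Fin n) (hv : v ∈ maskVerts M) (hu : u ∈ maskVerts M) :
    LDUB n k D M ≤ LDUB n k D (donate M v u) := by
  by_cases hvu : v = u
  · subst hvu
    have hds : donorSet M v v = ∅ := by
      rw [Finset.eq_empty_iff_forall_notMem]
      intro s hs
      obtain ⟨_, _, h1, h2⟩ := donorSet_mem_iff.mp hs
      exact h2 h1
    have hdo : donate M v v = M := by
      rw [donate, hds]
      simp
    rw [hdo]
  · rw [LDUB, LDUB]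
    apply add_le_add_right
    apply Finset.sum_le_sum
    intro d _
    apply mul_le_mul_of_nonneg_left _ (by positivity)
    have hc : (0 : ℝ) <
        ((Finset.powersetCard k (Finset.univ : Finset (Fin n))).card : ℝ) := by
      rw [Finset.card_powersetCard, Finset.card_univ, Fintype.card_fin]
      exact_mod_cast Nat.choose_pos hkn
    simp only [cliqueExp]
    rw [← Finset.sum_div, ← Finset.sum_div]
    rw [div_le_div_iff_of_pos_right hc, div_le_div_iff_of_pos_right hc]
    exact double_sum_le hMnd hvu k d

end PlantedCliqueLD
end
end

section
/- Let n, k ≤ n, D be positive integers. For any mask M over ground set [n], LDUB(n, M) ≤ 1 + Σ_{d=1}^{D} (1/d!)·( 2d / ln( 2d·n²/(|V(M)|·k²) + 1 ) )^{2d}, where ln denotes the natural logarithm. -/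
open Finset Filter Asymptotics Real MeasureTheory
open scoped Classical BigOperators

noncomputable section

namespace PlantedCliqueLD

-- pointwise lemma
lemma pow_le_exp_aux {r : ℕ} (hr : 1 ≤ r) {l x : ℝ} (hl : 0 < l) (hx : 0 ≤ x) :
    x ^ r ≤ ((r : ℝ) / (Real.exp 1 * l)) ^ r * Real.exp (l * x) := by
  have hrR : (0:ℝ) < r := by exact_mod_cast hr
  have hbase : (0:ℝ) < (r : ℝ) / (Real.exp 1 * l) :=
    div_pos hrR (mul_pos (Real.exp_pos 1) hl)
  rcases eq_or_lt_of_le hx with h0 | hx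
  · rw [← h0, zero_pow (by omega)]
    positivity
  · have hlx : 0 < l * x := mul_pos hl hx
    have key : Real.log (l * x / r) ≤ l * x / r - 1 :=
      Real.log_le_sub_one_of_pos (div_pos hlx hrR)
    rw [Real.log_div (ne_of_gt hlx) (ne_of_gt hrR), Real.log_mul (ne_of_gt hl) (ne_of_gt hx)] at key
    have key' : (r:ℝ) * (Real.log l + Real.log x - Real.log r) ≤ l * x - r := by
      have := mul_le_mul_of_nonneg_left key (le_of_lt hrR)
      calc (r:ℝ) * (Real.log l + Real.log x - Real.log r) ≤ (r:ℝ) * (l * x / r - 1) := this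
        _ = l * x - r := by field_simp
    have e1 : x ^ r = Real.exp ((r:ℝ) * Real.log x) := by
      rw [← Real.log_pow, Real.exp_log (pow_pos hx r)]
    have e2 : ((r : ℝ) / (Real.exp 1 * l)) ^ r * Real.exp (l * x)
        = Real.exp ((r:ℝ) * (Real.log r - 1 - Real.log l) + l * x) := by
      have hb : ((r:ℝ)/(Real.exp 1 * l)) ^ r
          = Real.exp ((r:ℝ) * Real.log ((r:ℝ)/(Real.exp 1 * l))) := by
        rw [← Real.log_pow, Real.exp_log (pow_pos hbase r)]
      rw [hb, ← Real.exp_add,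
        Real.log_div (ne_of_gt hrR) (ne_of_gt (mul_pos (Real.exp_pos 1) hl)),
        Real.log_mul (ne_of_gt (Real.exp_pos 1)) (ne_of_gt hl), Real.log_exp]
      ring_nf
    rw [e1, e2]
    apply Real.exp_le_exp.2
    linarith


lemma prod_indicator {n : ℕ} (A S : Finset (Fin n)) :
    (∏ v ∈ A, (if v ∈ S then (1:ℝ) else 0)) = if A ⊆ S then 1 else 0 := by
  by_cases h : A ⊆ S
  · rw [if_pos h]
    exact Finset.prod_eq_one fun v hv => if_pos (h hv)
  · rw [if_neg h]
    obtain ⟨v, hvA, hvS⟩ := Finset.not_subset.1 h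
    exact Finset.prod_eq_zero hvA (if_neg hvS)

lemma card_superset_filter {n k : ℕ} (A : Finset (Fin n)) (hA : A.card ≤ k) :
    ((Finset.powersetCard k (Finset.univ : Finset (Fin n))).filter (fun S => A ⊆ S)).card
      = (n - A.card).choose (k - A.card) := by
  have hcard : ((Finset.univ : Finset (Fin n)) \ A).card = n - A.card := by
    rw [Finset.card_sdiff_of_subset (Finset.subset_univ A), Finset.card_univ, Fintype.card_fin]
  rw [← hcard, ← Finset.card_powersetCard (k - A.card) ((Finset.univ : Finset (Fin n)) \ A)]
  apply Finset.card_bij' (fun S _ => S \ A) (fun T _ => T ∪ A)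
  · intro S hS
    simp only [Finset.mem_filter, Finset.mem_powersetCard_univ] at hS
    simp only [Finset.mem_powersetCard]
    exact ⟨fun x hx => by simp [Finset.mem_sdiff.1 hx],
      by rw [Finset.card_sdiff_of_subset hS.2, hS.1]⟩
  · intro T hT
    simp only [Finset.mem_powersetCard] at hT
    simp only [Finset.mem_filter, Finset.mem_powersetCard_univ]
    have hdis : Disjoint T A := fun x hx hxA => by
      intro y hy
      have := hT.1 (hx hy)
      simp only [Finset.mem_sdiff] at this
      exact absurd (hxA hy) this.2
    constructor
    · rw [Finset.card_union_of_disjoint hdis, hT.2]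
      omega
    · exact Finset.subset_union_right
  · intro S hS
    simp only [Finset.mem_filter, Finset.mem_powersetCard_univ] at hS
    exact Finset.sdiff_union_of_subset hS.2
  · intro T hT
    simp only [Finset.mem_powersetCard] at hT
    apply Finset.union_sdiff_cancel_right
    intro x hx hxA
    intro y hy
    have := hT.1 (hx hy)
    simp only [Finset.mem_sdiff] at this
    exact absurd (hxA hy) this.2

lemma choose_ratio {n k : ℕ} (hkn : k ≤ n) (hn : 0 < n) :
    ∀ a, a ≤ k → ((n - a).choose (k - a) : ℝ) ≤ (n.choose k : ℝ) * ((k:ℝ)/(n:ℝ))^a := by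
  intro a
  induction a with
  | zero => intro _; simp
  | succ a ih =>
    intro ha
    have ha' : a ≤ k := by omega
    have hak : a < k := by omega
    have han : a < n := by omega
    have hid : (n - a) * (n - (a+1)).choose (k - (a+1)) = (n - a).choose (k - a) * (k - a) := by
      have h1 : n - (a+1) + 1 = n - a := by omega
      have h2 : k - (a+1) + 1 = k - a := by omega
      have := Nat.add_one_mul_choose_eq (n - (a+1)) (k - (a+1))
      rw [h1, h2] at this
      linarith [this]
    have hna : (0:ℝ) < (n:ℝ) - a := by
      have : (a:ℝ) < n := by exact_mod_cast han
      linarith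
    have hcast : ((n - a : ℕ):ℝ) = (n:ℝ) - a := by
      rw [Nat.cast_sub (le_of_lt han)]
    have hkcast : ((k - a : ℕ):ℝ) = (k:ℝ) - a := by
      rw [Nat.cast_sub ha']
    have hR : ((n - (a+1)).choose (k - (a+1)) : ℝ)
        = ((n - a).choose (k - a) : ℝ) * (((k:ℝ) - a) / ((n:ℝ) - a)) := by
      have := congrArg (fun m : ℕ => (m:ℝ)) hid
      push_cast at this
      rw [hcast, hkcast] at this
      field_simp
      linarith [this]
    rw [hR]
    have hfrac : ((k:ℝ) - a) / ((n:ℝ) - a) ≤ (k:ℝ)/(n:ℝ) := by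
      rw [div_le_div_iff₀ hna (by exact_mod_cast hn)]
      have hkn' : (k:ℝ) ≤ n := by exact_mod_cast hkn
      have ha0 : (0:ℝ) ≤ a := by positivity
      nlinarith
    have hfrac0 : (0:ℝ) ≤ ((k:ℝ) - a) / ((n:ℝ) - a) := by
      apply div_nonneg _ (le_of_lt hna)
      have : (a:ℝ) ≤ k := by exact_mod_cast ha'
      linarith
    calc ((n - a).choose (k - a) : ℝ) * (((k:ℝ) - a) / ((n:ℝ) - a))
        ≤ ((n.choose k : ℝ) * ((k:ℝ)/(n:ℝ))^a) * ((k:ℝ)/(n:ℝ)) := by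
          apply mul_le_mul (ih ha') hfrac hfrac0
          positivity
      _ = (n.choose k : ℝ) * ((k:ℝ)/(n:ℝ))^(a+1) := by ring

lemma prob_superset_le {n k : ℕ} (hn : 0 < n) (hkn : k ≤ n) (A : Finset (Fin n)) :
    (((Finset.powersetCard k (Finset.univ : Finset (Fin n))).filter
        (fun S => A ⊆ S)).card : ℝ) ≤ (n.choose k : ℝ) * ((k:ℝ)/(n:ℝ))^A.card := by
  by_cases hA : A.card ≤ k
  · rw [card_superset_filter A hA]
    exact choose_ratio hkn hn A.card hA
  · have : (Finset.powersetCard k (Finset.univ : Finset (Fin n))).filter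
        (fun S => A ⊆ S) = ∅ := by
      apply Finset.filter_false_of_mem
      intro S hS hsub
      rw [Finset.mem_powersetCard_univ] at hS
      exact hA (hS ▸ Finset.card_le_card hsub)
    rw [this]
    simp
    positivity

lemma double_sum_mgf {n k : ℕ} (hn : 0 < n) (hkn : k ≤ n) (V : Finset (Fin n)) {c : ℝ}
    (hc : 0 ≤ c) :
    ∑ S ∈ Finset.powersetCard k (Finset.univ : Finset (Fin n)),
      ∑ S' ∈ Finset.powersetCard k (Finset.univ : Finset (Fin n)),
        ∏ v ∈ V, (1 + c * ((if v ∈ S then (1:ℝ) else 0) * (if v ∈ S' then (1:ℝ) else 0)))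
      ≤ ((n.choose k : ℝ))^2 * (c * ((k:ℝ)/(n:ℝ))^2 + 1) ^ V.card := by
  set P := Finset.powersetCard k (Finset.univ : Finset (Fin n)) with hP
  have expand : ∀ S S' : Finset (Fin n),
      (∏ v ∈ V, (1 + c * ((if v ∈ S then (1:ℝ) else 0) * (if v ∈ S' then (1:ℝ) else 0))))
      = ∑ A ∈ V.powerset, c ^ A.card *
          ((if A ⊆ S then (1:ℝ) else 0) * (if A ⊆ S' then (1:ℝ) else 0)) := by
    intro S S'
    have : (∏ v ∈ V, (1 + c * ((if v ∈ S then (1:ℝ) else 0) * (if v ∈ S' then (1:ℝ) else 0))))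
        = ∏ v ∈ V, ((c * ((if v ∈ S then (1:ℝ) else 0) * (if v ∈ S' then (1:ℝ) else 0))) + 1) := by
      apply Finset.prod_congr rfl; intro v _; ring
    rw [this, Finset.prod_add]
    apply Finset.sum_congr rfl
    intro A hA
    rw [Finset.prod_const_one, mul_one, Finset.prod_mul_distrib, Finset.prod_const,
      Finset.prod_mul_distrib, prod_indicator, prod_indicator]
  have step1 : ∑ S ∈ P, ∑ S' ∈ P,
      ∏ v ∈ V, (1 + c * ((if v ∈ S then (1:ℝ) else 0) * (if v ∈ S' then (1:ℝ) else 0)))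
      = ∑ A ∈ V.powerset, c ^ A.card * ((P.filter (fun S => A ⊆ S)).card : ℝ)^2 := by
    calc ∑ S ∈ P, ∑ S' ∈ P,
        ∏ v ∈ V, (1 + c * ((if v ∈ S then (1:ℝ) else 0) * (if v ∈ S' then (1:ℝ) else 0)))
        = ∑ S ∈ P, ∑ S' ∈ P, ∑ A ∈ V.powerset, c ^ A.card *
            ((if A ⊆ S then (1:ℝ) else 0) * (if A ⊆ S' then (1:ℝ) else 0)) := by
          apply Finset.sum_congr rfl; intro S _; apply Finset.sum_congr rfl; intro S' _
          exact expand S S'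
      _ = ∑ S ∈ P, ∑ A ∈ V.powerset, ∑ S' ∈ P, c ^ A.card *
            ((if A ⊆ S then (1:ℝ) else 0) * (if A ⊆ S' then (1:ℝ) else 0)) :=
          Finset.sum_congr rfl fun S _ => Finset.sum_comm
      _ = ∑ A ∈ V.powerset, ∑ S ∈ P, ∑ S' ∈ P, c ^ A.card *
            ((if A ⊆ S then (1:ℝ) else 0) * (if A ⊆ S' then (1:ℝ) else 0)) :=
          Finset.sum_comm
      _ = ∑ A ∈ V.powerset, c ^ A.card * ((P.filter (fun S => A ⊆ S)).card : ℝ)^2 := by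
          apply Finset.sum_congr rfl; intro A _
          simp only [← Finset.mul_sum]
          congr 1
          rw [← Finset.sum_mul]
          simp only [Finset.sum_boole]
          ring
  rw [step1]
  have step2 : ∑ A ∈ V.powerset, c ^ A.card * ((P.filter (fun S => A ⊆ S)).card : ℝ)^2
      ≤ ∑ A ∈ V.powerset, ((n.choose k : ℝ))^2 * (c * ((k:ℝ)/(n:ℝ))^2) ^ A.card := by
    apply Finset.sum_le_sum
    intro A _
    have h1 := prob_superset_le hn hkn (k := k) A
    have h2 : (0:ℝ) ≤ ((P.filter (fun S => A ⊆ S)).card : ℝ) := by positivity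
    have h3 : ((P.filter (fun S => A ⊆ S)).card : ℝ)^2
        ≤ ((n.choose k : ℝ) * ((k:ℝ)/(n:ℝ))^A.card)^2 := by
      apply pow_le_pow_left₀ h2 h1
    calc c ^ A.card * ((P.filter (fun S => A ⊆ S)).card : ℝ)^2
        ≤ c ^ A.card * ((n.choose k : ℝ) * ((k:ℝ)/(n:ℝ))^A.card)^2 := by
          apply mul_le_mul_of_nonneg_left h3 (by positivity)
      _ = ((n.choose k : ℝ))^2 * (c * ((k:ℝ)/(n:ℝ))^2) ^ A.card := by
          rw [mul_pow, mul_pow, ← pow_mul, ← pow_mul]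
          ring_nf
  refine le_trans step2 ?_
  rw [← Finset.mul_sum]
  apply mul_le_mul_of_nonneg_left _ (by positivity)
  have := Finset.sum_pow_mul_eq_add_pow (c * ((k:ℝ)/(n:ℝ))^2) (1:ℝ) V
  rw [← this]
  apply le_of_eq
  apply Finset.sum_congr rfl
  intro A _
  rw [one_pow, mul_one]


section Aux

lemma Phi_le_card_sq {n : ℕ} (M : Finset (Sym2 (Fin n))) (U : Finset (Fin n)) :
    Phi M U ≤ (((U ∩ maskVerts M)).card : ℝ)^2 := by
  have h1 : Phi M U = ((M.filter fun e => edgeIn U e).card : ℝ) := by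
    rw [Phi, Finset.sum_boole]
  have h2 : (M.filter fun e => edgeIn U e) ⊆ (U ∩ maskVerts M).sym2 := by
    intro e he
    rw [Finset.mem_filter] at he
    rw [Finset.mem_sym2_iff]
    intro a ha
    rw [Finset.mem_inter]
    refine ⟨he.2 a ha, ?_⟩
    rw [maskVerts, Finset.mem_filter]
    exact ⟨Finset.mem_univ a, e, he.1, ha⟩
  have h3 := Finset.card_le_card h2
  rw [Finset.card_sym2] at h3
  set w := (U ∩ maskVerts M).card with hw
  have h4 : (w + 1).choose 2 ≤ w^2 := by
    rw [Nat.choose_two_right, Nat.add_sub_cancel]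
    have e1 : (w+1) * w = w*w + w := by ring
    rcases Nat.eq_zero_or_pos w with h | h
    · simp [h]
    · have hww : w ≤ w * w := Nat.le_mul_of_pos_left w h
      rw [e1, pow_two]
      omega
  have h5 : (M.filter fun e => edgeIn U e).card ≤ w^2 := le_trans h3 h4
  rw [h1]
  calc ((M.filter fun e => edgeIn U e).card : ℝ) ≤ ((w^2 : ℕ) : ℝ) := by exact_mod_cast h5
    _ = (w : ℝ)^2 := by push_cast; ring

lemma exp_card_inter_eq {n : ℕ} (V S S' : Finset (Fin n)) {l q : ℝ}
    (hq : Real.exp l = q + 1) :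
    Real.exp (l * (((S ∩ S' ∩ V)).card : ℝ))
      = ∏ v ∈ V, (1 + q * ((if v ∈ S then (1:ℝ) else 0) * (if v ∈ S' then (1:ℝ) else 0))) := by
  have hT : (S ∩ S' ∩ V) = V.filter (fun v => v ∈ S ∩ S') := by
    ext v
    simp only [Finset.mem_inter, Finset.mem_filter]
    tauto
  have hcard : (((S ∩ S' ∩ V)).card : ℝ) = ∑ v ∈ V, (if v ∈ S ∩ S' then (1:ℝ) else 0) := by
    rw [hT, Finset.sum_boole]
  rw [hcard, Finset.mul_sum, Real.exp_sum]
  apply Finset.prod_congr rfl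
  intro v _
  by_cases hS : v ∈ S <;> by_cases hS' : v ∈ S'
  · have hv : v ∈ S ∩ S' := Finset.mem_inter.2 ⟨hS, hS'⟩
    simp only [if_pos hv, if_pos hS, if_pos hS', mul_one, hq]
    ring
  all_goals {
    have hv : v ∉ S ∩ S' := by
      rw [Finset.mem_inter]
      tauto
    simp only [if_neg hv, mul_zero, Real.exp_zero]
    simp [hS, hS'] }

lemma core_bound {n k : ℕ} (hn : 0 < n) (hk : 0 < k) (hkn : k ≤ n)
    (M : Finset (Sym2 (Fin n))) (hM : 0 < (maskVerts M).card) {d : ℕ} (hd : 1 ≤ d) :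
    cliqueExp n k (fun S => cliqueExp n k fun S' => Phi M (S ∩ S') ^ d) ≤
      ((2 * (d:ℝ)) / Real.log (2 * (d:ℝ) * (n:ℝ)^2 /
        (((maskVerts M).card : ℝ) * (k:ℝ)^2) + 1)) ^ (2*d) := by
  set V := maskVerts M with hV
  clear_value V
  have hmR : (0:ℝ) < ((V.card : ℕ) : ℝ) := by exact_mod_cast hM
  have hnR : (0:ℝ) < (n:ℝ) := by exact_mod_cast hn
  have hkR : (0:ℝ) < (k:ℝ) := by exact_mod_cast hk
  have hdR : (0:ℝ) < (d:ℝ) := by exact_mod_cast hd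
  set q : ℝ := 2 * (d:ℝ) * (n:ℝ)^2 / (((V.card : ℕ) : ℝ) * (k:ℝ)^2) with hqdef
  have hq : 0 < q := by rw [hqdef]; positivity
  clear_value q
  set l : ℝ := Real.log (q + 1) with hldef
  have hl : 0 < l := by rw [hldef]; exact Real.log_pos (by linarith)
  have hexp : Real.exp l = q + 1 := by rw [hldef]; exact Real.exp_log (by linarith)
  clear_value l
  set P := Finset.powersetCard k (Finset.univ : Finset (Fin n)) with hPdef
  have hNcard : P.card = n.choose k := by
    rw [hPdef, Finset.card_powersetCard, Finset.card_univ, Fintype.card_fin]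
  have hNpos : (0:ℝ) < (P.card : ℝ) := by
    rw [hNcard]
    exact_mod_cast Nat.choose_pos hkn
  set N : ℝ := (P.card : ℝ) with hNdef
  clear_value N
  set C : ℝ := ((2 * d : ℕ) : ℝ) / (Real.exp 1 * l) with hCdef
  have hC : 0 < C := by
    rw [hCdef]
    apply div_pos
    · have : (0:ℕ) < 2 * d := by omega
      exact_mod_cast this
    · exact mul_pos (Real.exp_pos 1) hl
  clear_value C
  have key : ∀ S S' : Finset (Fin n), Phi M (S ∩ S') ^ d ≤
      C ^ (2*d) * Real.exp (l * (((S ∩ S' ∩ V)).card : ℝ)) := by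
    intro S S'
    have h0 : (0:ℝ) ≤ Phi M (S ∩ S') := by
      rw [Phi]
      apply Finset.sum_nonneg
      intro e _
      positivity
    have h1 : Phi M (S ∩ S') ≤ ((((S ∩ S') ∩ V)).card : ℝ)^2 := by
      rw [hV]; exact Phi_le_card_sq M (S ∩ S')
    have h2 : Phi M (S ∩ S') ^ d ≤ (((((S ∩ S') ∩ V)).card : ℝ)^2)^d :=
      pow_le_pow_left₀ h0 h1 d
    rw [← pow_mul] at h2
    refine h2.trans ?_
    rw [hCdef]
    exact pow_le_exp_aux (by omega) hl (Nat.cast_nonneg _)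
  have hrw : cliqueExp n k (fun S => cliqueExp n k fun S' => Phi M (S ∩ S') ^ d)
      = (∑ S ∈ P, ∑ S' ∈ P, Phi M (S ∩ S') ^ d) / (N * N) := by
    simp only [cliqueExp, ← hPdef]
    rw [← Finset.sum_div, div_div, ← hNdef]
  rw [hrw]
  rw [div_le_iff₀ (mul_pos hNpos hNpos)]
  have hsum1 : ∑ S ∈ P, ∑ S' ∈ P, Phi M (S ∩ S') ^ d
      ≤ ∑ S ∈ P, ∑ S' ∈ P, C ^ (2*d) * Real.exp (l * (((S ∩ S' ∩ V)).card : ℝ)) := by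
    apply Finset.sum_le_sum
    intro S _
    apply Finset.sum_le_sum
    intro S' _
    exact key S S'
  refine le_trans hsum1 ?_
  have hsum2 : ∑ S ∈ P, ∑ S' ∈ P, C ^ (2*d) * Real.exp (l * (((S ∩ S' ∩ V)).card : ℝ))
      = C ^ (2*d) * ∑ S ∈ P, ∑ S' ∈ P,
          ∏ v ∈ V, (1 + q * ((if v ∈ S then (1:ℝ) else 0) * (if v ∈ S' then (1:ℝ) else 0))) := by
    rw [Finset.mul_sum]
    apply Finset.sum_congr rfl
    intro S _
    rw [Finset.mul_sum]
    apply Finset.sum_congr rfl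
    intro S' _
    rw [exp_card_inter_eq V S S' hexp]
  rw [hsum2]
  have hmgf := double_sum_mgf hn hkn V (le_of_lt hq)
  rw [← hPdef] at hmgf
  have hqp : q * ((k:ℝ)/(n:ℝ))^2 = 2 * (d:ℝ) / ((V.card : ℕ) : ℝ) := by
    rw [hqdef]
    field_simp
  have hfin : (q * ((k:ℝ)/(n:ℝ))^2 + 1) ^ V.card ≤ Real.exp (2 * (d:ℝ)) := by
    rw [hqp]
    have h1 : 2 * (d:ℝ) / ((V.card : ℕ) : ℝ) + 1 ≤ Real.exp (2 * (d:ℝ) / ((V.card : ℕ) : ℝ)) :=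
      Real.add_one_le_exp _
    have h2 : (2 * (d:ℝ) / ((V.card : ℕ) : ℝ) + 1) ^ V.card
        ≤ Real.exp (2 * (d:ℝ) / ((V.card : ℕ) : ℝ)) ^ V.card := by
      apply pow_le_pow_left₀ (by positivity) h1
    refine h2.trans ?_
    rw [← Real.exp_nat_mul]
    apply le_of_eq
    congr 1
    field_simp
  have hNchoose : N = (n.choose k : ℝ) := by rw [hNdef, hNcard]
  have hstep : ∑ S ∈ P, ∑ S' ∈ P,
      ∏ v ∈ V, (1 + q * ((if v ∈ S then (1:ℝ) else 0) * (if v ∈ S' then (1:ℝ) else 0)))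
      ≤ N * N * Real.exp (2 * (d:ℝ)) := by
    refine hmgf.trans ?_
    rw [hNchoose]
    have : (0:ℝ) ≤ ((n.choose k : ℕ) : ℝ)^2 := by positivity
    calc ((n.choose k : ℕ) : ℝ)^2 * (q * ((k:ℝ)/(n:ℝ))^2 + 1) ^ V.card
        ≤ ((n.choose k : ℕ) : ℝ)^2 * Real.exp (2 * (d:ℝ)) :=
          mul_le_mul_of_nonneg_left hfin this
      _ = ((n.choose k : ℕ) : ℝ) * ((n.choose k : ℕ) : ℝ) * Real.exp (2 * (d:ℝ)) := by ring
  calc C ^ (2*d) * ∑ S ∈ P, ∑ S' ∈ P,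
        ∏ v ∈ V, (1 + q * ((if v ∈ S then (1:ℝ) else 0) * (if v ∈ S' then (1:ℝ) else 0)))
      ≤ C ^ (2*d) * (N * N * Real.exp (2 * (d:ℝ))) :=
        mul_le_mul_of_nonneg_left hstep (by positivity)
    _ = (C ^ (2*d) * Real.exp (2 * (d:ℝ))) * (N * N) := by ring
    _ = ((2 * (d:ℝ)) / l) ^ (2*d) * (N * N) := by
        congr 1
        rw [hCdef]
        have hcast : ((2 * d : ℕ) : ℝ) = 2 * (d:ℝ) := by push_cast; ring
        rw [hcast]
        have hexp2 : Real.exp (2 * (d:ℝ)) = Real.exp 1 ^ (2*d) := by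
          rw [← Real.exp_nat_mul]
          congr 1
          push_cast
          ring
        rw [hexp2, div_pow, div_pow, mul_pow, div_mul_eq_mul_div,
          div_eq_div_iff (by positivity) (by positivity)]
        ring

end Aux

/-- For any mask `M`,
`LDUB(n,M) ≤ 1 + ∑_{d=1}^D (1/d!) (2d / ln(2d n² / (|V(M)| k²) + 1))^{2d}`. -/
theorem ldub_few_vertices {n : ℕ} (k D : ℕ) (hn : 0 < n) (hk : 0 < k) (hkn : k ≤ n)
    (hD : 0 < D) (M : Finset (Sym2 (Fin n))) (hMnd : ∀ e ∈ M, ¬ e.IsDiag) :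
    LDUB n k D M ≤ 1 + ∑ d ∈ Finset.Icc 1 D, (1 / (Nat.factorial d : ℝ)) *
      ((2 * (d : ℝ)) /
        Real.log (2 * (d : ℝ) * (n : ℝ) ^ 2 /
          (((maskVerts M).card : ℝ) * (k : ℝ) ^ 2) + 1)) ^ (2 * d) := by
  rcases M.eq_empty_or_nonempty with hMe | hMne
  · subst hMe
    have hlhs : LDUB n k D ∅ = 1 := by
      rw [LDUB]
      have : ∀ d ∈ Finset.Icc 1 D, (1 / (Nat.factorial d : ℝ)) *
          cliqueExp n k (fun S => cliqueExp n k fun S' => Phi (∅ : Finset (Sym2 (Fin n))) (S ∩ S') ^ d) = 0 := by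
        intro d hd
        rw [Finset.mem_Icc] at hd
        have hPhi : ∀ U : Finset (Fin n), Phi (∅ : Finset (Sym2 (Fin n))) U = 0 := by
          intro U
          rw [Phi]
          simp
        have : cliqueExp n k (fun S => cliqueExp n k fun S' =>
            Phi (∅ : Finset (Sym2 (Fin n))) (S ∩ S') ^ d) = 0 := by
          rw [cliqueExp]
          have : ∀ S : Finset (Fin n),
              cliqueExp n k (fun S' => Phi (∅ : Finset (Sym2 (Fin n))) (S ∩ S') ^ d) = 0 := by
            intro S
            rw [cliqueExp]
            have : ∀ S' ∈ Finset.powersetCard k (Finset.univ : Finset (Fin n)),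
                Phi (∅ : Finset (Sym2 (Fin n))) (S ∩ S') ^ d = 0 := by
              intro S' _
              rw [hPhi, zero_pow (by omega)]
            rw [Finset.sum_congr rfl this, Finset.sum_const, smul_zero, zero_div]
          rw [Finset.sum_congr rfl (fun S _ => this S), Finset.sum_const, smul_zero, zero_div]
        rw [this, mul_zero]
      rw [Finset.sum_congr rfl this, Finset.sum_const, smul_zero, add_zero]
    rw [hlhs]
    have : (0:ℝ) ≤ ∑ d ∈ Finset.Icc 1 D, (1 / (Nat.factorial d : ℝ)) *
        ((2 * (d : ℝ)) / Real.log (2 * (d : ℝ) * (n : ℝ) ^ 2 /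
          (((maskVerts (∅ : Finset (Sym2 (Fin n)))).card : ℝ) * (k : ℝ) ^ 2) + 1)) ^ (2 * d) := by
      apply Finset.sum_nonneg
      intro d _
      apply mul_nonneg (by positivity)
      rw [pow_mul]
      positivity
    linarith
  · have hm : 0 < (maskVerts M).card := by
      obtain ⟨e, he⟩ := hMne
      apply Finset.card_pos.2
      induction e using Sym2.inductionOn with
      | hf a b =>
        exact ⟨a, by
          rw [maskVerts, Finset.mem_filter]
          exact ⟨Finset.mem_univ a, s(a, b), he, Sym2.mem_mk_left a b⟩⟩
    rw [LDUB]
    apply (add_le_add_iff_left 1).2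
    apply Finset.sum_le_sum
    intro d hd
    rw [Finset.mem_Icc] at hd
    apply mul_le_mul_of_nonneg_left _ (by positivity)
    exact core_bound hn hk hkn M hm hd.1

end PlantedCliqueLD
end
end
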